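/- In the weighted polynomial ring M = ℂ[Q,R] with the Serre derivation D, every nonzero graded ideal I stable under D contains some power of the principal ideal 𝔭 = (Δ), where Δ = (Q³-R²)/1728; i.e., there is r ≥ 0 with 𝔭^r ⊆ I. -/

import Mathlib

open MvPolynomial

noncomputable section

/-- The ring of modular forms, modeled as a weighted polynomial ring `ℂ[Q,R]`,
`Q` of weight 4, `R` of weight 6. -/
abbrev MM := MvPolynomial (Fin 2) ℂ

def Qg : MM := X 0
def Rg : MM := X 1

/-- The weights: `deg Q = 4`, `deg R = 6`. -/
def wt : Fin 2 → ℕ := ![4, 6]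

/-- The Serre derivation, determined by `D(Q) = -(1/3) R` and `D(R) = -(1/2) Q²`. -/
def Dser : Derivation ℂ MM MM :=
  mkDerivation ℂ ![(-(1/3 : ℂ)) • Rg, (-(1/2 : ℂ)) • Qg ^ 2]

/-- `Δ = (Q³ - R²)/1728`. -/
def Δg : MM := (1/1728 : ℂ) • (Qg ^ 3 - Rg ^ 2)

/-- An ideal is graded (w.r.t. the weighted grading) if it is spanned by its
weighted-homogeneous elements. -/
def IsGradedIdeal (I : Ideal MM) : Prop :=
  I = Ideal.span {x : MM | x ∈ I ∧ ∃ n : ℕ, x ∈ weightedHomogeneousSubmodule ℂ wt n}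

-- weight computation
lemma wt0 : wt 0 = 4 := rfl
lemma wt1 : wt 1 = 6 := rfl

lemma weight_eval (d : Fin 2 →₀ ℕ) : Finsupp.weight wt d = d 0 * 4 + d 1 * 6 := by
  rw [Finsupp.weight_apply, Finsupp.sum_fintype]
  · simp [Fin.sum_univ_two, wt, mul_comm]
  · intro i; simp

-- Dser as combination of pderivs
lemma Dser_eq (f : MM) :
    6 * Dser f = -2 * Rg * pderiv 0 f - 3 * Qg ^ 2 * pderiv 1 f := by
  have : ((6 : MM)) • Dser
      = ((-2 : MM) * Rg) • (pderiv 0 : Derivation ℂ MM MM)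
        + ((-3 : MM) * Qg ^ 2) • (pderiv 1 : Derivation ℂ MM MM) := by
    apply derivation_ext
    intro i
    fin_cases i <;>
      simp [Dser, mkDerivation_X, Derivation.smul_apply, Derivation.add_apply,
        pderiv_X, Pi.single_apply, smul_eq_C_mul] <;>
      rw [show ((6:MM)) = C (6:ℂ) from (map_ofNat C 6).symm, ← mul_assoc, ← C_mul] <;>
      norm_num <;> exact Or.inl (map_ofNat C _)
  have h := congrArg (fun D => D f) this
  simp only [Derivation.smul_apply, Derivation.add_apply, smul_eq_mul] at h
  rw [h]; ring

lemma X_mul_pderiv_monomial (i : Fin 2) (d : Fin 2 →₀ ℕ) (c : ℂ) :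
    (X i : MM) * pderiv i (monomial d c) = (d i : ℂ) • monomial d c := by
  rw [pderiv_monomial]
  by_cases h : d i = 0
  · simp [h]
  · rw [X, monomial_mul, smul_monomial]
    have hd : (Finsupp.single i 1) + (d - Finsupp.single i 1) = d := by
      ext a
      simp only [Finsupp.add_apply, Finsupp.tsub_apply, Finsupp.single_apply]
      rcases eq_or_ne i a with rfl | hne
      · simp; omega
      · simp [hne]
    rw [hd]
    congr 1
    rw [one_mul, mul_comm, smul_eq_mul]

lemma euler {n : ℕ} {f : MM} (hf : IsWeightedHomogeneous wt f n) :
    4 * (Qg * pderiv 0 f) + 6 * (Rg * pderiv 1 f) = C (n : ℂ) * f := by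
  conv_lhs => rw [f.as_sum]
  conv_rhs => rw [f.as_sum]
  rw [Finset.mul_sum]
  simp only [map_sum, Finset.mul_sum, ← Finset.sum_add_distrib]
  apply Finset.sum_congr rfl
  intro d hd
  rw [Qg, Rg, X_mul_pderiv_monomial, X_mul_pderiv_monomial]
  have hw : (d 0 : ℂ) * 4 + d 1 * 6 = (n : ℂ) := by
    have := hf (mem_support_iff.mp hd)
    rw [weight_eval] at this
    exact_mod_cast congrArg (Nat.cast : ℕ → ℂ) this
  rw [show ((4:MM)) = C (4:ℂ) from (map_ofNat C 4).symm,
    show ((6:MM)) = C (6:ℂ) from (map_ofNat C 6).symm,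
    smul_monomial, smul_monomial, C_mul_monomial, C_mul_monomial, C_mul_monomial,
    ← map_add]
  congr 1
  rw [smul_eq_mul, smul_eq_mul]
  linear_combination coeff d f * hw

lemma pderiv_homog {n : ℕ} {f : MM} (i : Fin 2) (hf : IsWeightedHomogeneous wt f n) :
    IsWeightedHomogeneous wt (pderiv i f) (n - wt i) := by
  rw [← mem_weightedHomogeneousSubmodule]
  rw [f.as_sum, map_sum]
  apply Submodule.sum_mem
  intro d hd
  rw [pderiv_monomial]
  by_cases h : d i = 0
  · simp [h]
  · rw [mem_weightedHomogeneousSubmodule]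
    apply isWeightedHomogeneous_monomial
    have hw : d 0 * 4 + d 1 * 6 = n := by
      rw [← weight_eval]; exact hf (mem_support_iff.mp hd)
    rw [weight_eval]
    simp only [Finsupp.tsub_apply, Finsupp.single_apply]
    fin_cases i <;> simp_all [wt0, wt1] <;> omega

lemma homog_zero_eq_C {f : MM} (hf : IsWeightedHomogeneous wt f 0) :
    f = C (coeff 0 f) := by
  apply MvPolynomial.ext
  intro d
  rw [coeff_C]
  split_ifs with h
  · rw [h]
  · by_contra hc
    have := hf hc
    rw [weight_eval] at this
    apply h
    ext a
    fin_cases a <;> simp <;> omega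

lemma keyA {n : ℕ} {f : MM} (hf : IsWeightedHomogeneous wt f n) :
    12 * ((Qg ^ 3 - Rg ^ 2) * pderiv 0 f)
      = C (n : ℂ) * (3 * Qg ^ 2 * f) + 36 * (Rg * Dser f) := by
  have hE := euler hf
  have hS := Dser_eq f
  linear_combination 3 * Qg ^ 2 * hE - 6 * Rg * hS

lemma keyB {n : ℕ} {f : MM} (hf : IsWeightedHomogeneous wt f n) :
    12 * ((Qg ^ 3 - Rg ^ 2) * pderiv 1 f)
      = -(C (n : ℂ) * (2 * Rg * f)) - 24 * (Qg * Dser f) := by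
  have hE := euler hf
  have hS := Dser_eq f
  linear_combination (-2) * Rg * hE + 4 * Qg * hS

lemma twelve_C : (12 : MM) = C (12 : ℂ) := (map_ofNat C 12).symm

lemma main_lemma (P : Ideal MM) (hP : P.IsPrime) (hDP : ∀ f ∈ P, Dser f ∈ P) :
    ∀ n : ℕ, ∀ f : MM, f ∈ P → f ≠ 0 → IsWeightedHomogeneous wt f n →
      Qg ^ 3 - Rg ^ 2 ∈ P := by
  intro n
  induction n using Nat.strong_induction_on with
  | _ n IH =>
  intro f hfP hf0 hfh
  by_cases hQR : Qg ^ 3 - Rg ^ 2 ∈ P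
  · exact hQR
  rcases Nat.eq_zero_or_pos n with rfl | hn
  · exfalso
    have hc := homog_zero_eq_C hfh
    have hc0 : coeff 0 f ≠ 0 := by
      intro h; rw [h, map_zero] at hc; exact hf0 hc
    have h1 : (1 : MM) = C (coeff 0 f)⁻¹ * f := by
      nth_rewrite 2 [hc]
      rw [← C_mul, inv_mul_cancel₀ hc0, C_1]
    exact hP.ne_top (Ideal.eq_top_iff_one P |>.mpr (h1 ▸ P.mul_mem_left _ hfP))
  have hDf := hDP f hfP
  have inv12 : ∀ g : MM, 12 * g ∈ P → g ∈ P := by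
    intro g hg
    have : g = C (1/12 : ℂ) * (12 * g) := by
      rw [← mul_assoc, twelve_C, ← C_mul]; norm_num
    rw [this]; exact P.mul_mem_left _ hg
  have hA : pderiv 0 f ∈ P := by
    apply inv12
    have hmem : 12 * pderiv 0 f * (Qg ^ 3 - Rg ^ 2) ∈ P := by
      rw [show 12 * pderiv 0 f * (Qg ^ 3 - Rg ^ 2) = 12 * ((Qg ^ 3 - Rg ^ 2) * pderiv 0 f)
          by ring, keyA hfh]
      exact P.add_mem (P.mul_mem_left _ (P.mul_mem_left _ hfP)) (P.mul_mem_left _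
      (P.mul_mem_left _ hDf))
    rcases hP.mem_or_mem hmem with h | h
    · exact h
    · exact absurd h hQR
  have hB : pderiv 1 f ∈ P := by
    apply inv12
    have hmem : 12 * pderiv 1 f * (Qg ^ 3 - Rg ^ 2) ∈ P := by
      rw [show 12 * pderiv 1 f * (Qg ^ 3 - Rg ^ 2) = 12 * ((Qg ^ 3 - Rg ^ 2) * pderiv 1 f)
          by ring, keyB hfh]
      apply P.sub_mem
      · exact P.neg_mem (P.mul_mem_left _ (P.mul_mem_left _ hfP))
      · exact P.mul_mem_left _ (P.mul_mem_left _ hDf)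
    rcases hP.mem_or_mem hmem with h | h
    · exact h
    · exact absurd h hQR
  by_cases hA0 : pderiv 0 f = 0
  · by_cases hB0 : pderiv 1 f = 0
    · exfalso
      have hE := euler hfh
      rw [hA0, hB0] at hE
      simp only [mul_zero, add_zero, zero_add] at hE
      have hCn : (C ((n : ℂ)) : MM) ≠ 0 := by
        rw [Ne, C_eq_zero]
        exact_mod_cast (Nat.pos_iff_ne_zero.mp hn)
      exact hf0 ((mul_eq_zero.mp hE.symm).resolve_left hCn)
    · exact IH (n - wt 1) (Nat.sub_lt hn (by rw [wt1]; norm_num)) (pderiv 1 f) hB hB0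
        (pderiv_homog 1 hfh)
  · exact IH (n - wt 0) (Nat.sub_lt hn (by rw [wt0]; norm_num)) (pderiv 0 f) hA hA0
      (pderiv_homog 0 hfh)

open Finset in
lemma iterate_Dser_mul (p q : MM) {n : ℕ} :
    (⇑Dser)^[n] (p * q) =
      ∑ k ∈ range n.succ, (n.choose k • ((⇑Dser)^[n - k] p * (⇑Dser)^[k] q)) := by
  induction n with
  | zero =>
    simp [Finset.range]
  | succ n IH =>
    calc
      (⇑Dser)^[n + 1] (p * q) =
          Dser (∑ k ∈ range n.succ,
              n.choose k • ((⇑Dser)^[n - k] p * (⇑Dser)^[k] q)) := by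
        rw [Function.iterate_succ_apply', IH]
      _ = (∑ k ∈ range n.succ,
            n.choose k • ((⇑Dser)^[n - k + 1] p * (⇑Dser)^[k] q)) +
          ∑ k ∈ range n.succ,
            n.choose k • ((⇑Dser)^[n - k] p * (⇑Dser)^[k + 1] q) := by
        rw [map_sum]
        simp_rw [map_nsmul, Derivation.leibniz, smul_eq_mul, Function.iterate_succ_apply',
          smul_add, sum_add_distrib]
        rw [add_comm]
        congr 1
        · apply sum_congr rfl; intro k _; rw [mul_comm]
      _ = (∑ k ∈ range n.succ,
                n.choose k.succ • ((⇑Dser)^[n - k] p * (⇑Dser)^[k + 1] q)) +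
              1 • ((⇑Dser)^[n + 1] p * (⇑Dser)^[0] q) +
            ∑ k ∈ range n.succ, n.choose k • ((⇑Dser)^[n - k] p * (⇑Dser)^[k + 1] q) :=
        ?_
      _ = ((∑ k ∈ range n.succ, n.choose k • ((⇑Dser)^[n - k] p * (⇑Dser)^[k + 1] q)) +
              ∑ k ∈ range n.succ,
                n.choose k.succ • ((⇑Dser)^[n - k] p * (⇑Dser)^[k + 1] q)) +
            1 • ((⇑Dser)^[n + 1] p * (⇑Dser)^[0] q) := by
        rw [add_comm, add_assoc]
      _ = (∑ i ∈ range n.succ,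
              (n + 1).choose (i + 1) • ((⇑Dser)^[n + 1 - (i + 1)] p * (⇑Dser)^[i + 1] q)) +
            1 • ((⇑Dser)^[n + 1] p * (⇑Dser)^[0] q) := by
        simp_rw [Nat.choose_succ_succ, Nat.succ_sub_succ, add_smul, sum_add_distrib]
      _ = ∑ k ∈ range n.succ.succ,
            n.succ.choose k • ((⇑Dser)^[n.succ - k] p * (⇑Dser)^[k] q) := by
        rw [sum_range_succ' _ n.succ, Nat.choose_zero_right, tsub_zero]
    congr
    refine (sum_range_succ' _ _).trans (congr_arg₂ (· + ·) ?_ ?_)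
    · rw [sum_range_succ, Nat.choose_succ_self, zero_smul, add_zero]
      refine sum_congr rfl fun k hk => ?_
      rw [mem_range] at hk
      congr
      omega
    · rw [Nat.choose_zero_right, tsub_zero]

lemma iterate_Dser_add (a b : MM) (m : ℕ) :
    (⇑Dser)^[m] (a + b) = (⇑Dser)^[m] a + (⇑Dser)^[m] b := by
  induction m with
  | zero => rfl
  | succ m IH => rw [Function.iterate_succ_apply', Function.iterate_succ_apply',
      Function.iterate_succ_apply', IH, map_add]

lemma iterate_Dser_zero (m : ℕ) : (⇑Dser)^[m] (0 : MM) = 0 := by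
  induction m with
  | zero => rfl
  | succ m IH => rw [Function.iterate_succ_apply', IH, map_zero]

/-- The largest `D`-stable ideal contained in the maximal ideal of the point `x`. -/
def Jid (x : Fin 2 → ℂ) : Ideal MM where
  carrier := {f | ∀ m : ℕ, eval x ((⇑Dser)^[m] f) = 0}
  zero_mem' := by intro m; rw [iterate_Dser_zero, map_zero]
  add_mem' := by
    intro a b ha hb m
    rw [iterate_Dser_add, map_add, ha m, hb m, add_zero]
  smul_mem' := by
    intro c f hf m
    rw [smul_eq_mul, iterate_Dser_mul, map_sum]
    apply Finset.sum_eq_zero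
    intro k hk
    rw [map_nsmul, map_mul, hf k, mul_zero, smul_zero]

lemma mem_Jid {x : Fin 2 → ℂ} {f : MM} :
    f ∈ Jid x ↔ ∀ m : ℕ, eval x ((⇑Dser)^[m] f) = 0 := Iff.rfl

lemma Jid_prime (x : Fin 2 → ℂ) : (Jid x).IsPrime := by
  constructor
  · rw [Ideal.ne_top_iff_one, mem_Jid]
    push_neg
    exact ⟨0, by simp⟩
  · intro a b hab
    by_contra hcon
    push_neg at hcon
    obtain ⟨ha, hb⟩ := hcon
    rw [mem_Jid] at ha hb
    push_neg at ha hb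
    classical
    set m := Nat.find ha with hm
    set n := Nat.find hb with hn
    have hma : eval x ((⇑Dser)^[m] a) ≠ 0 := Nat.find_spec ha
    have hnb : eval x ((⇑Dser)^[n] b) ≠ 0 := Nat.find_spec hb
    have h0 := (mem_Jid.mp hab) (m + n)
    rw [iterate_Dser_mul, map_sum] at h0
    rw [Finset.sum_eq_single_of_mem n (Finset.mem_range.mpr (by omega))] at h0
    · rw [map_nsmul, map_mul] at h0
      have : m + n - n = m := by omega
      rw [this] at h0
      have hch : ((m + n).choose n : ℂ) ≠ 0 := by
        exact_mod_cast Nat.pos_iff_ne_zero.mp (Nat.choose_pos (by omega))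
      rw [nsmul_eq_mul] at h0
      rcases mul_eq_zero.mp h0 with h | h
      · exact hch h
      · rcases mul_eq_zero.mp h with h' | h'
        · exact hma h'
        · exact hnb h'
    · intro k hkmem hkne
      rcases lt_or_gt_of_ne hkne with hlt | hgt
      · rw [map_nsmul, map_mul, not_not.mp (Nat.find_min hb hlt), mul_zero, smul_zero]
      · have : m + n - k < m := by rw [Finset.mem_range] at hkmem; omega
        rw [map_nsmul, map_mul, not_not.mp (Nat.find_min ha this), zero_mul, smul_zero]

/-- Every nonzero graded `d`-ideal of `M = ℂ[Q,R]` contains a power of the principal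
ideal `𝔭 = (Δ)`. -/
theorem d_ideal_contains_power_of_delta (I : Ideal MM) (hne : I ≠ ⊥) (hgr : IsGradedIdeal I)
    (hD : ∀ f ∈ I, Dser f ∈ I) :
    ∃ r : ℕ, (Ideal.span {Δg}) ^ r ≤ I := by
  -- a nonzero weighted-homogeneous element of I
  obtain ⟨f₀, hf₀I, hf₀0, n₀, hf₀h⟩ :
      ∃ f, f ∈ I ∧ f ≠ 0 ∧ ∃ n, IsWeightedHomogeneous wt f n := by
    by_contra hcon
    push_neg at hcon
    apply hne
    rw [hgr, Ideal.span_eq_bot]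
    rintro x ⟨hxI, n, hxh⟩
    by_contra hx0
    exact (hcon x hxI hx0 n) ((mem_weightedHomogeneousSubmodule _ _ _ _).mp hxh)
  -- Δ vanishes on the zero locus of I
  have hvan : ∀ x ∈ zeroLocus ℂ I, eval x Δg = 0 := by
    intro x hx
    have hIJ : ∀ g ∈ I, g ∈ Jid x := by
      intro g hg
      rw [mem_Jid]
      intro m
      have hmem : ∀ m : ℕ, (⇑Dser)^[m] g ∈ I := by
        intro m
        induction m with
        | zero => exact hg
        | succ m IH => rw [Function.iterate_succ_apply']; exact hD _ IH
      have := (mem_zeroLocus_iff.mp hx) _ (hmem m)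
      exact this
    have hDJ : ∀ f ∈ Jid x, Dser f ∈ Jid x := by
      intro f hf
      rw [mem_Jid]
      intro m
      have := mem_Jid.mp hf (m + 1)
      rwa [Function.iterate_succ_apply] at this
    have hQR : Qg ^ 3 - Rg ^ 2 ∈ Jid x :=
      main_lemma (Jid x) (Jid_prime x) hDJ n₀ f₀ (hIJ f₀ hf₀I) hf₀0 hf₀h
    have h0 := mem_Jid.mp hQR 0
    simp only [Function.iterate_zero, id_eq] at h0
    rw [Δg, smul_eq_C_mul, map_mul, h0, mul_zero]
  have hrad : Δg ∈ I.radical := by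
    rw [← vanishingIdeal_zeroLocus_eq_radical (K := ℂ), mem_vanishingIdeal_iff]
    exact hvan
  obtain ⟨r, hr⟩ := Ideal.mem_radical_iff.mp hrad
  refine ⟨r, ?_⟩
  rw [Ideal.span_singleton_pow, Ideal.span_le, Set.singleton_subset_iff]
  exact hr

end
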